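/- Under the setting of Algorithm 1, the output D^p = σ₁²·1 + σ²·1 − D₁ᵈ − 2D₂ᵈ + D₃ᵈ − D_ℓ, where D₁ᵈ, D₂ᵈ, D₃ᵈ are deterministic and D_ℓ is the unbiased stochastic estimate of diag((Σ_{nn_p}^s)ᵀ Σ̃_s⁻¹ Σ_{nn_p}^s), is an unbiased and consistent estimator of the FSA predictive variance vector diag(Σ^p_†) = σ₁²·1 + σ²·1 − diag((Σ_{nn_p}^†)ᵀ Σ̃_†⁻¹ Σ_{nn_p}^†). -/

import Mathlib

open Matrix MeasureTheory ProbabilityTheory Filter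

section Helpers

variable {Ω : Type*} [MeasurableSpace Ω] {μ : Measure Ω} [IsProbabilityMeasure μ]

lemma half_add_half : (1/2 : ENNReal) + 1/2 = 1 := by
  rw [ENNReal.div_add_div_same]
  norm_num
  exact ENNReal.div_self (by norm_num) (by norm_num)

lemma rad_ae {W : Ω → ℝ} (hW : Measurable W) (h1 : μ {ω | W ω = 1} = 1/2)
    (h2 : μ {ω | W ω = -1} = 1/2) : ∀ᵐ ω ∂μ, W ω = 1 ∨ W ω = -1 := by
  have hAm : MeasurableSet {ω | W ω = 1} := hW (measurableSet_singleton 1)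
  have hCm : MeasurableSet {ω | W ω = -1} := hW (measurableSet_singleton (-1))
  have hdisj : Disjoint {ω | W ω = 1} {ω | W ω = -1} := by
    rw [Set.disjoint_left]; intro ω hω h'; simp only [Set.mem_setOf_eq] at hω h'
    rw [hω] at h'; norm_num at h'
  have hu : μ ({ω | W ω = 1} ∪ {ω | W ω = -1}) = 1 := by
    rw [measure_union hdisj hCm, h1, h2, half_add_half]
  have hc : μ ({ω | W ω = 1} ∪ {ω | W ω = -1})ᶜ = 0 := by
    rw [measure_compl (hAm.union hCm) (measure_ne_top _ _), hu, measure_univ, tsub_self]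
  rw [ae_iff]
  convert hc using 2
  ext ω; simp

lemma rad_integrable {W : Ω → ℝ} (hW : Measurable W) (h1 : μ {ω | W ω = 1} = 1/2)
    (h2 : μ {ω | W ω = -1} = 1/2) : Integrable W μ := by
  refine (integrable_const (1:ℝ)).mono' hW.aestronglyMeasurable ?_
  filter_upwards [rad_ae hW h1 h2] with ω hω
  rcases hω with h | h <;> simp [h]

lemma rad_integral {W : Ω → ℝ} (hW : Measurable W) (h1 : μ {ω | W ω = 1} = 1/2)
    (h2 : μ {ω | W ω = -1} = 1/2) : ∫ ω, W ω ∂μ = 0 := by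
  have hAm : MeasurableSet {ω | W ω = 1} := hW (measurableSet_singleton 1)
  have hCm : MeasurableSet {ω | W ω = -1} := hW (measurableSet_singleton (-1))
  have hae : W =ᵐ[μ] fun ω => Set.indicator {ω | W ω = 1} (fun _ => (1:ℝ)) ω
      - Set.indicator {ω | W ω = -1} (fun _ => (1:ℝ)) ω := by
    filter_upwards [rad_ae hW h1 h2] with ω hω
    rcases hω with h | h <;> simp [Set.indicator_apply, h] <;> norm_num
  rw [integral_congr_ae hae, integral_sub ((integrable_const (1:ℝ)).indicator hAm)
    ((integrable_const (1:ℝ)).indicator hCm), integral_indicator_const _ hAm,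
    integral_indicator_const _ hCm, measureReal_def, measureReal_def, h1, h2]
  simp

noncomputable def radLaw : Measure ℝ :=
  (2:ENNReal)⁻¹ • MeasureTheory.Measure.dirac 1 + (2:ENNReal)⁻¹ • MeasureTheory.Measure.dirac (-1)

instance : IsProbabilityMeasure (radLaw) := by
  constructor
  rw [radLaw]
  simp [ENNReal.inv_two_add_inv_two]

lemma rad_map {W : Ω → ℝ} (hW : Measurable W) (h1 : μ {ω | W ω = 1} = 1/2)
    (h2 : μ {ω | W ω = -1} = 1/2) {s : Set ℝ} (hs : MeasurableSet s) :
    μ (W ⁻¹' s) = radLaw s := by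
  classical
  have hAm : MeasurableSet {ω | W ω = 1} := hW (measurableSet_singleton 1)
  have hCm : MeasurableSet {ω | W ω = -1} := hW (measurableSet_singleton (-1))
  have hdisj : Disjoint (W ⁻¹' s ∩ {ω | W ω = 1}) (W ⁻¹' s ∩ {ω | W ω = -1}) := by
    rw [Set.disjoint_left]; rintro ω ⟨-, hω⟩ ⟨-, h'⟩
    simp only [Set.mem_setOf_eq] at hω h'; rw [hω] at h'; norm_num at h'
  have hc : μ ({ω | W ω = 1} ∪ {ω | W ω = -1})ᶜ = 0 := by
    have := rad_ae hW h1 h2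
    rw [ae_iff] at this
    convert this using 2
    ext ω; simp
  have key : μ (W ⁻¹' s) = μ (W ⁻¹' s ∩ {ω | W ω = 1}) + μ (W ⁻¹' s ∩ {ω | W ω = -1}) := by
    rw [← measure_union hdisj ((hW hs).inter hCm), ← Set.inter_union_distrib_left]
    exact (measure_inter_conull hc).symm
  have e1 : μ (W ⁻¹' s ∩ {ω | W ω = 1}) = if (1:ℝ) ∈ s then 1/2 else 0 := by
    by_cases h1s : (1:ℝ) ∈ s
    · rw [if_pos h1s, ← h1]; congr 1
      ext ω; simp only [Set.mem_inter_iff, Set.mem_preimage, Set.mem_setOf_eq]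
      exact ⟨fun h => h.2, fun h => ⟨h ▸ h1s, h⟩⟩
    · rw [if_neg h1s]
      convert measure_empty (μ := μ)
      ext ω; simp only [Set.mem_inter_iff, Set.mem_preimage, Set.mem_setOf_eq,
        Set.mem_empty_iff_false, iff_false, not_and]
      intro hws hw1; exact h1s (hw1 ▸ hws)
  have e2 : μ (W ⁻¹' s ∩ {ω | W ω = -1}) = if (-1:ℝ) ∈ s then 1/2 else 0 := by
    by_cases h1s : (-1:ℝ) ∈ s
    · rw [if_pos h1s, ← h2]; congr 1
      ext ω; simp only [Set.mem_inter_iff, Set.mem_preimage, Set.mem_setOf_eq]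
      exact ⟨fun h => h.2, fun h => ⟨h ▸ h1s, h⟩⟩
    · rw [if_neg h1s]
      convert measure_empty (μ := μ)
      ext ω; simp only [Set.mem_inter_iff, Set.mem_preimage, Set.mem_setOf_eq,
        Set.mem_empty_iff_false, iff_false, not_and]
      intro hws hw1; exact h1s (hw1 ▸ hws)
  rw [key, e1, e2, radLaw]
  simp only [Measure.coe_add, Measure.coe_smul, Pi.add_apply, Pi.smul_apply, smul_eq_mul,
    Measure.dirac_apply' _ hs]
  by_cases hA : (1:ℝ) ∈ s <;> by_cases hB : (-1:ℝ) ∈ s <;>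
    simp [hA, hB, Set.indicator_apply, one_div]

/-- The finset of indices with first coordinate `i`. -/
def idxS (np : ℕ) (i : ℕ) : Finset (ℕ × Fin np) :=
  Finset.univ.map ⟨fun k : Fin np => (i, k), fun _ _ h => ((Prod.mk.injEq _ _ _ _).mp h).2⟩

lemma mem_idxS {np : ℕ} {i a : ℕ} {b : Fin np} : (a, b) ∈ idxS np i ↔ a = i := by
  simp only [idxS, Finset.mem_map, Finset.mem_univ, true_and, Function.Embedding.coeFn_mk,
    Prod.mk.injEq]
  constructor
  · rintro ⟨c, rfl, rfl⟩; rfl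
  · rintro rfl; exact ⟨b, rfl⟩

lemma zvec_map {np : ℕ} (z : ℕ → Ω → Fin np → ℝ)
    (hmeas : ∀ i, Measurable (z i))
    (hindep : iIndepFun
      (fun (p : ℕ × Fin np) ω => z p.1 ω p.2) μ)
    (hdist : ∀ i j, μ {ω | z i ω j = 1} = 1 / 2 ∧ μ {ω | z i ω j = -1} = 1 / 2)
    (i : ℕ) :
    Measure.map (z i) μ = Measure.pi (fun _ : Fin np => radLaw) := by
  refine (Measure.pi_eq fun s hs => ?_).symm
  rw [Measure.map_apply (hmeas i) (MeasurableSet.univ_pi hs)]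
  have hpre : (z i) ⁻¹' (Set.pi Set.univ s) = ⋂ k, (fun ω => z i ω k) ⁻¹' (s k) := by
    ext ω; simp [Set.mem_pi]
  rw [hpre]
  classical
  have hbi := hindep.meas_biInter (S := idxS np i)
    (s := fun p => (fun ω => z p.1 ω p.2) ⁻¹' (s p.2))
    (fun p _ => ⟨s p.2, hs p.2, rfl⟩)
  have hset : (⋂ p ∈ idxS np i, (fun ω => z p.1 ω p.2) ⁻¹' (s p.2))
      = ⋂ k, (fun ω => z i ω k) ⁻¹' (s k) := by
    ext ω
    simp only [Set.mem_iInter, Set.mem_preimage]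
    constructor
    · intro h k; exact h (i, k) (mem_idxS.mpr rfl)
    · rintro h ⟨a, b⟩ hm; rw [mem_idxS] at hm; subst hm; exact h b
  have hprod : ∏ p ∈ idxS np i, μ ((fun ω => z p.1 ω p.2) ⁻¹' (s p.2))
      = ∏ k, radLaw (s k) := by
    rw [idxS, Finset.prod_map]
    refine Finset.prod_congr rfl fun k _ => ?_
    exact rad_map ((measurable_pi_apply k).comp (hmeas i)) (hdist i k).1 (hdist i k).2 (hs k)
  rw [← hset, hbi, hprod]

lemma zvec_ident {np : ℕ} (z : ℕ → Ω → Fin np → ℝ)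
    (hmeas : ∀ i, Measurable (z i))
    (hindep : iIndepFun
      (fun (p : ℕ × Fin np) ω => z p.1 ω p.2) μ)
    (hdist : ∀ i j, μ {ω | z i ω j = 1} = 1 / 2 ∧ μ {ω | z i ω j = -1} = 1 / 2)
    (i : ℕ) : IdentDistrib (z i) (z 0) μ μ :=
  ⟨(hmeas i).aemeasurable, (hmeas 0).aemeasurable, by
    rw [zvec_map z hmeas hindep hdist i, zvec_map z hmeas hindep hdist 0]⟩

lemma zvec_indep {np : ℕ} (z : ℕ → Ω → Fin np → ℝ)
    (hmeas : ∀ i, Measurable (z i))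
    (hindep : iIndepFun
      (fun (p : ℕ × Fin np) ω => z p.1 ω p.2) μ)
    {i i' : ℕ} (h : i ≠ i') : IndepFun (z i) (z i') μ := by
  classical
  have hdisj : Disjoint (idxS np i) (idxS np i') := by
    rw [Finset.disjoint_left]
    rintro ⟨a, b⟩ hp hp'
    rw [mem_idxS] at hp hp'
    exact h (hp ▸ hp')
  have hbase := hindep.indepFun_finset (idxS np i) (idxS np i') hdisj
    (fun p => (measurable_pi_apply p.2).comp (hmeas p.1))
  let φ : ∀ a : ℕ, ({p // p ∈ idxS np a} → ℝ) → (Fin np → ℝ) :=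
    fun a v k => v ⟨(a, k), mem_idxS.mpr rfl⟩
  have hφ : ∀ a, Measurable (φ a) := fun a =>
    measurable_pi_lambda _ fun k => measurable_pi_apply _
  have hcomp : ∀ a : ℕ, z a
      = (φ a) ∘ (fun ω (p : {p // p ∈ idxS np a}) => z p.1.1 ω p.1.2) := by
    intro a; funext ω k; rfl
  rw [hcomp i, hcomp i']
  exact hbase.comp (hφ i) (hφ i')

end Helpers

lemma alg_key {n np m : ℕ}
    (Ss : Matrix (Fin n) (Fin n) ℝ) (Sm : Matrix (Fin m) (Fin m) ℝ)
    (Smn : Matrix (Fin m) (Fin n) ℝ) (Smnp : Matrix (Fin m) (Fin np) ℝ)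
    (Snnp : Matrix (Fin n) (Fin np) ℝ)
    (hSs : Ss.PosDef) (hSm : Sm.PosDef) (j : Fin np) :
    ((Smnᵀ * Sm⁻¹ * Smnp + Snnp)ᵀ * (Ss + Smnᵀ * Sm⁻¹ * Smn)⁻¹ * (Smnᵀ * Sm⁻¹ * Smnp + Snnp)) j j
      = (Smnpᵀ * Sm⁻¹ * Smn * (Ss + Smnᵀ * Sm⁻¹ * Smn)⁻¹ * Smnᵀ * Sm⁻¹ * Smnp) j j
        + 2 * (Snnpᵀ * (Ss + Smnᵀ * Sm⁻¹ * Smn)⁻¹ * Smnᵀ * Sm⁻¹ * Smnp) j j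
        - (Snnpᵀ * Ss⁻¹ * Smnᵀ * (Sm + Smn * Ss⁻¹ * Smnᵀ)⁻¹ * Smn * Ss⁻¹ * Snnp) j j
        + (Snnpᵀ * Ss⁻¹ * Snnp) j j := by
  have hSsT : Ssᵀ = Ss := by
    simpa [conjTranspose_eq_transpose_of_trivial] using hSs.isHermitian.eq
  have hSmT : Smᵀ = Sm := by
    simpa [conjTranspose_eq_transpose_of_trivial] using hSm.isHermitian.eq
  have hSmiT : Sm⁻¹ᵀ = Sm⁻¹ := by rw [transpose_nonsing_inv, hSmT]
  have hSsiT : Ss⁻¹ᵀ = Ss⁻¹ := by rw [transpose_nonsing_inv, hSsT]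
  -- SigDag pos def
  have hSmInv : (Sm⁻¹).PosDef := hSm.inv
  have hSsInv : (Ss⁻¹).PosDef := hSs.inv
  have hsd : (Ss + Smnᵀ * Sm⁻¹ * Smn).PosDef := by
    refine hSs.add_posSemidef ?_
    have := hSmInv.posSemidef.conjTranspose_mul_mul_same Smn
    simpa [conjTranspose_eq_transpose_of_trivial] using this
  have hMm : (Sm + Smn * Ss⁻¹ * Smnᵀ).PosDef := by
    refine hSm.add_posSemidef ?_
    have := hSsInv.posSemidef.mul_mul_conjTranspose_same Smn
    simpa [conjTranspose_eq_transpose_of_trivial, Matrix.mul_assoc] using this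
  -- Woodbury
  have hwood : (Ss + Smnᵀ * Sm⁻¹ * Smn)⁻¹
      = Ss⁻¹ - Ss⁻¹ * Smnᵀ * (Sm + Smn * Ss⁻¹ * Smnᵀ)⁻¹ * Smn * Ss⁻¹ := by
    have h := add_mul_mul_inv_eq_sub Ss Smnᵀ Sm⁻¹ Smn hSs.isUnit hSm.inv.isUnit
      (by rw [nonsing_inv_nonsing_inv _ (isUnit_iff_isUnit_det _ |>.1 hSm.isUnit)]; exact hMm.isUnit)
    rw [h, nonsing_inv_nonsing_inv _ (isUnit_iff_isUnit_det _ |>.1 hSm.isUnit)]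
  -- symmetry of SigDag⁻¹
  have hPT : ((Ss + Smnᵀ * Sm⁻¹ * Smn)⁻¹)ᵀ = (Ss + Smnᵀ * Sm⁻¹ * Smn)⁻¹ := by
    rw [transpose_nonsing_inv]
    congr 1
    simp [transpose_add, transpose_mul, hSsT, hSmiT, Matrix.mul_assoc]
  set P := (Ss + Smnᵀ * Sm⁻¹ * Smn)⁻¹ with hP
  set A := Smnᵀ * Sm⁻¹ * Smnp with hA
  have hAT : Aᵀ = Smnpᵀ * Sm⁻¹ * Smn := by
    simp [hA, transpose_mul, hSmiT, Matrix.mul_assoc]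
  have expand : (A + Snnp)ᵀ * P * (A + Snnp)
      = Aᵀ * P * A + (Snnpᵀ * P * A)ᵀ + Snnpᵀ * P * A + Snnpᵀ * P * Snnp := by
    simp only [transpose_add, transpose_mul, transpose_transpose, hPT, Matrix.add_mul,
      Matrix.mul_add, Matrix.mul_assoc]
    abel
  have hlast : Snnpᵀ * P * Snnp
      = Snnpᵀ * Ss⁻¹ * Snnp - Snnpᵀ * Ss⁻¹ * Smnᵀ * (Sm + Smn * Ss⁻¹ * Smnᵀ)⁻¹ * Smn * Ss⁻¹ * Snnp := by
    rw [hwood]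
    simp only [Matrix.mul_sub, Matrix.sub_mul, Matrix.mul_assoc]
  rw [expand, hlast, hAT]
  simp only [Matrix.add_apply, Matrix.sub_apply, transpose_apply]
  have : (Smnpᵀ * Sm⁻¹ * Smn * P * A) j j = (Smnpᵀ * Sm⁻¹ * Smn * P * Smnᵀ * Sm⁻¹ * Smnp) j j := by
    rw [hA]; simp [Matrix.mul_assoc]
  rw [this]
  have h2 : (Snnpᵀ * P * A) j j = (Snnpᵀ * P * Smnᵀ * Sm⁻¹ * Smnp) j j := by
    rw [hA]; simp [Matrix.mul_assoc]
  rw [h2]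
  ring

/-- Proposition 1: Algorithm 1 produces unbiased and consistent estimates of the
FSA predictive variances. With `Ss = Σ̃_s` (positive definite), `Sm = Σ_m`
(positive definite), cross-covariances `Smn`, `Smnp`, `Snnp = Σˢ_{n n_p}`, the
FSA training covariance `Σ̃_† = Ss + Smnᵀ Sm⁻¹ Smn`, the FSA cross-covariance
`Σ†_{n n_p} = Smnᵀ Sm⁻¹ Smnp + Snnp`, deterministic diagonals `D₁ᵈ, D₂ᵈ, D₃ᵈ` and
the stochastic diagonal estimate `D_ℓ` of `diag(Snnpᵀ Ss⁻¹ Snnp)` computed with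
i.i.d. Rademacher probe vectors `z`, the output
`D^p = σ₁²·1 + σ²·1 − D₁ᵈ − 2D₂ᵈ + D₃ᵈ − D_ℓ` has expectation equal to the
predictive variance `diag(Σ^p_†) = σ₁²·1 + σ²·1 − diag((Σ†_{n n_p})ᵀ Σ̃_†⁻¹ Σ†_{n n_p})`
and converges to it almost surely as `ℓ → ∞`. -/
theorem stmt14 {n np m : ℕ} {Ω : Type*} [MeasurableSpace Ω]
    (μ : Measure Ω) [IsProbabilityMeasure μ]
    (Ss : Matrix (Fin n) (Fin n) ℝ) (Sm : Matrix (Fin m) (Fin m) ℝ)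
    (Smn : Matrix (Fin m) (Fin n) ℝ) (Smnp : Matrix (Fin m) (Fin np) ℝ)
    (Snnp : Matrix (Fin n) (Fin np) ℝ) (σ1sq σsq : ℝ)
    (hSs : Ss.PosDef) (hSm : Sm.PosDef)
    (z : ℕ → Ω → Fin np → ℝ)
    (hmeas : ∀ i, Measurable (z i))
    (hindep : iIndepFun
      (fun (p : ℕ × Fin np) ω => z p.1 ω p.2) μ)
    (hdist : ∀ i j, μ {ω | z i ω j = 1} = 1 / 2 ∧ μ {ω | z i ω j = -1} = 1 / 2) :
    let SigDag := Ss + Smnᵀ * Sm⁻¹ * Smn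
    let Cross := Smnᵀ * Sm⁻¹ * Smnp + Snnp
    let Mmat := Sm + Smn * Ss⁻¹ * Smnᵀ
    let B := Snnpᵀ * Ss⁻¹ * Snnp
    let D1 : Fin np → ℝ := fun j => (Smnpᵀ * Sm⁻¹ * Smn * SigDag⁻¹ * Smnᵀ * Sm⁻¹ * Smnp) j j
    let D2 : Fin np → ℝ := fun j => (Snnpᵀ * SigDag⁻¹ * Smnᵀ * Sm⁻¹ * Smnp) j j
    let D3 : Fin np → ℝ := fun j => (Snnpᵀ * Ss⁻¹ * Smnᵀ * Mmat⁻¹ * Smn * Ss⁻¹ * Snnp) j j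
    let Dl : ℕ → Ω → Fin np → ℝ := fun ℓ ω j =>
      (ℓ : ℝ)⁻¹ * ∑ i ∈ Finset.range ℓ, z i ω j * (B.mulVec (z i ω)) j
    let Dp : ℕ → Ω → Fin np → ℝ := fun ℓ ω j =>
      σ1sq + σsq - D1 j - 2 * D2 j + D3 j - Dl ℓ ω j
    let target : Fin np → ℝ := fun j => σ1sq + σsq - (Crossᵀ * SigDag⁻¹ * Cross) j j
    (∀ ℓ : ℕ, 0 < ℓ → ∀ j, ∫ ω, Dp ℓ ω j ∂μ = target j) ∧
      ∀ᵐ ω ∂μ, ∀ j, Tendsto (fun ℓ : ℕ => Dp ℓ ω j) atTop (nhds (target j)) := by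
  classical
  intro SigDag Cross Mmat B D1 D2 D3 Dl Dp target
  have keyId : ∀ j, (Crossᵀ * SigDag⁻¹ * Cross) j j
      = D1 j + 2 * D2 j - D3 j + B j j := fun j =>
    alg_key Ss Sm Smn Smnp Snnp hSs hSm j
  set X : Fin np → ℕ → Ω → ℝ := fun j i ω => z i ω j * (B.mulVec (z i ω)) j with hXdef
  have hg : ∀ j : Fin np, Measurable (fun v : Fin np → ℝ => v j * ∑ k, B j k * v k) := fun j =>
    (measurable_pi_apply j).mul (Finset.measurable_sum _ fun k _ =>
      (measurable_pi_apply k).const_mul _)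
  have hXeq : ∀ j i, X j i = (fun v : Fin np → ℝ => v j * ∑ k, B j k * v k) ∘ (z i) := by
    intro j i; funext ω
    simp [hXdef, Matrix.mulVec, dotProduct]
  have hmeasX : ∀ j i, Measurable (X j i) := fun j i => by
    rw [hXeq]; exact (hg j).comp (hmeas i)
  have hall : ∀ i, ∀ᵐ ω ∂μ, ∀ k, z i ω k = 1 ∨ z i ω k = -1 := fun i => by
    rw [ae_all_iff]; intro k
    exact rad_ae ((measurable_pi_apply k).comp (hmeas i)) (hdist i k).1 (hdist i k).2
  have habs : ∀ i, ∀ᵐ ω ∂μ, ∀ k, |z i ω k| ≤ 1 := fun i => by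
    filter_upwards [hall i] with ω hω k
    rcases hω k with h | h <;> simp [h]
  have hXint : ∀ j i, Integrable (X j i) μ := by
    intro j i
    refine (integrable_const (∑ k, |B j k|)).mono' (hmeasX j i).aestronglyMeasurable ?_
    filter_upwards [habs i] with ω hω
    have hb : ‖X j i ω‖ = |z i ω j| * |(B.mulVec (z i ω)) j| := by
      rw [hXdef]; exact abs_mul _ _
    rw [hb]
    calc |z i ω j| * |(B.mulVec (z i ω)) j| ≤ 1 * |(B.mulVec (z i ω)) j| := by
          apply mul_le_mul_of_nonneg_right (hω j) (abs_nonneg _)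
      _ = |∑ k, B j k * z i ω k| := by rw [one_mul]; rfl
      _ ≤ ∑ k, |B j k * z i ω k| := Finset.abs_sum_le_sum_abs _ _
      _ ≤ ∑ k, |B j k| := by
          refine Finset.sum_le_sum fun k _ => ?_
          rw [abs_mul]
          exact mul_le_of_le_one_right (abs_nonneg _) (hω k)
  have hcoordint : ∀ i (k : Fin np), Integrable (fun ω => z i ω k) μ := fun i k =>
    rad_integrable ((measurable_pi_apply k).comp (hmeas i)) (hdist i k).1 (hdist i k).2
  have hpairint : ∀ i (j k : Fin np), Integrable (fun ω => z i ω j * z i ω k) μ := by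
    intro i j k
    refine (integrable_const (1:ℝ)).mono'
      ((((measurable_pi_apply j).comp (hmeas i)).mul
        ((measurable_pi_apply k).comp (hmeas i)))).aestronglyMeasurable ?_
    filter_upwards [hall i] with ω hω
    rcases hω j with h | h <;> rcases hω k with h' | h' <;> simp [h, h']
  have hprodval : ∀ i (j k : Fin np), ∫ ω, z i ω j * z i ω k ∂μ = if k = j then 1 else 0 := by
    intro i j k
    by_cases hkj : k = j
    · subst hkj
      rw [if_pos rfl]
      have hae1 : (fun ω => z i ω k * z i ω k) =ᵐ[μ] fun _ => (1:ℝ) := by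
        filter_upwards [hall i] with ω hω
        rcases hω k with h | h <;> simp [h]
      rw [integral_congr_ae hae1]; simp
    · rw [if_neg hkj]
      have hne : ((i, j) : ℕ × Fin np) ≠ (i, k) := by
        simp only [Ne, Prod.mk.injEq, not_and]
        exact fun _ h => hkj h.symm
      have hind : IndepFun (fun ω => z i ω j) (fun ω => z i ω k) μ := hindep.indepFun hne
      have h0 : ∫ ω, z i ω j * z i ω k ∂μ = (∫ ω, z i ω j ∂μ) * ∫ ω, z i ω k ∂μ :=
        hind.integral_fun_mul_eq_mul_integral (hcoordint i j).1 (hcoordint i k).1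
      rw [h0, rad_integral (W := fun ω => z i ω j) ((measurable_pi_apply j).comp (hmeas i))
        (hdist i j).1 (hdist i j).2, zero_mul]
  have hXexp : ∀ i (j : Fin np), ∫ ω, X j i ω ∂μ = B j j := by
    intro i j
    have hrw : (fun ω => X j i ω) = fun ω => ∑ k, B j k * (z i ω j * z i ω k) := by
      funext ω
      rw [hXdef]
      simp only [Matrix.mulVec, dotProduct, Finset.mul_sum]
      exact Finset.sum_congr rfl fun k _ => by ring
    rw [hrw, integral_finset_sum _ (fun k _ => ((hpairint i j k).const_mul _))]
    have hterm : ∀ k : Fin np, ∫ ω, B j k * (z i ω j * z i ω k) ∂μ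
        = B j k * (if k = j then 1 else 0) := fun k => by
      rw [integral_const_mul, hprodval i j k]
    rw [Finset.sum_congr rfl fun k _ => hterm k]
    simp [mul_ite]
  have hXindep : ∀ j : Fin np, Pairwise (Function.onFun (IndepFun · · μ) (X j)) := by
    intro j i i' h
    have hzz := zvec_indep z hmeas hindep h
    simp only [Function.onFun]
    rw [hXeq j i, hXeq j i']
    exact hzz.comp (hg j) (hg j)
  have hXident : ∀ (j : Fin np) i, IdentDistrib (X j i) (X j 0) μ μ := by
    intro j i
    rw [hXeq j i, hXeq j 0]
    exact (zvec_ident z hmeas hindep hdist i).comp (hg j)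
  have hslln : ∀ᵐ ω ∂μ, ∀ j : Fin np,
      Tendsto (fun ℓ : ℕ => (∑ i ∈ Finset.range ℓ, X j i ω) / ℓ) atTop (nhds (B j j)) := by
    rw [ae_all_iff]
    intro j
    have h := strong_law_ae_real (X j) (hXint j 0) (hXindep j) (hXident j)
    rw [hXexp 0 j] at h
    exact h
  have hDlX : ∀ (ℓ : ℕ) ω (j : Fin np),
      Dl ℓ ω j = (ℓ : ℝ)⁻¹ * ∑ i ∈ Finset.range ℓ, X j i ω := fun ℓ ω j => rfl
  have htargetEq : ∀ j : Fin np,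
      target j = (σ1sq + σsq - D1 j - 2 * D2 j + D3 j) - B j j := by
    intro j
    show σ1sq + σsq - (Crossᵀ * SigDag⁻¹ * Cross) j j = _
    rw [keyId j]; ring
  constructor
  · intro ℓ hℓ j
    have hDlint : Integrable (fun ω => Dl ℓ ω j) μ := by
      simp only [hDlX]
      exact (integrable_finset_sum _ (fun i _ => hXint j i)).const_mul _
    have hDlval : ∫ ω, Dl ℓ ω j ∂μ = B j j := by
      simp only [hDlX]
      rw [integral_const_mul, integral_finset_sum _ fun i _ => hXint j i,
        Finset.sum_congr rfl fun i _ => hXexp i j, Finset.sum_const, Finset.card_range,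
        nsmul_eq_mul]
      rw [← mul_assoc, inv_mul_cancel₀ (by exact_mod_cast hℓ.ne'), one_mul]
    have : ∫ ω, Dp ℓ ω j ∂μ
        = (σ1sq + σsq - D1 j - 2 * D2 j + D3 j) - ∫ ω, Dl ℓ ω j ∂μ := by
      show ∫ ω, ((σ1sq + σsq - D1 j - 2 * D2 j + D3 j) - Dl ℓ ω j) ∂μ = _
      rw [integral_sub (integrable_const _) hDlint, integral_const]
      simp
    rw [this, hDlval, htargetEq j]
  · filter_upwards [hslln] with ω hω j
    have h1 : Tendsto (fun ℓ : ℕ => Dl ℓ ω j) atTop (nhds (B j j)) := by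
      simp only [hDlX]
      have := hω j
      simp only [div_eq_inv_mul] at this
      exact this
    have h2 := h1.const_sub (σ1sq + σsq - D1 j - 2 * D2 j + D3 j)
    rw [← htargetEq j] at h2
    exact h2
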